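/- Let f: [0,1]^d → ℝ be Lipschitz with constant ℓ with respect to the sup norm (|f(x)−f(y)| ≤ ℓ‖x−y‖_∞) and bounded by Γ (|f| ≤ Γ). Then for every ε > 0, n ∈ ℕ, and x ∈ [0,1]^d, the degree-n multivariate Bernstein polynomial satisfies |f(x) − B_n(f; x)| ≤ ε + 2Γ·((1 + ℓ²/(4nε²))^d − 1). -/

import Mathlib

open Finset

/-- The unit cube `[0,1]^d`. -/
def cube (d : ℕ) : Set (Fin d → ℝ) := Set.univ.pi fun _ => Set.Icc (0 : ℝ) 1

/-- The degree-`n` multivariate Bernstein polynomial of `f`. -/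
noncomputable def bernsteinPoly (d n : ℕ) (f : (Fin d → ℝ) → ℝ) (x : Fin d → ℝ) : ℝ :=
  ∑ k : Fin d → Fin (n + 1), f (fun j => (k j : ℝ) / n) *
    ∏ j, (n.choose (k j) : ℝ) * x j ^ (k j : ℕ) * (1 - x j) ^ (n - (k j : ℕ))

/-- Bernstein approximation bound for a function Lipschitz in the sup norm and bounded
by `Γ`:  `|f(x) − B_n(f;x)| ≤ ε + 2Γ((1 + ℓ²/(4nε²))^d − 1)`. -/
theorem bernstein_approx_lipschitz (d : ℕ) (f : (Fin d → ℝ) → ℝ) (ℓ Γ : ℝ)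
    (hlip : ∀ x ∈ cube d, ∀ y ∈ cube d, |f x - f y| ≤ ℓ * ‖x - y‖)
    (hbd : ∀ x ∈ cube d, |f x| ≤ Γ) :
    ∀ ε > (0 : ℝ), ∀ n : ℕ, 0 < n → ∀ x ∈ cube d,
      |f x - bernsteinPoly d n f x| ≤
        ε + 2 * Γ * ((1 + ℓ ^ 2 / (4 * n * ε ^ 2)) ^ d - 1) := by
  intro ε hε n hn x hx
  have hnR : (0:ℝ) < n := by exact_mod_cast hn
  have hx01 : ∀ j, x j ∈ Set.Icc (0:ℝ) 1 := fun j => hx j (Set.mem_univ j)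
  have hΓ : 0 ≤ Γ := le_trans (abs_nonneg _) (hbd x hx)
  set y : (Fin d → Fin (n+1)) → (Fin d → ℝ) := fun k j => (k j : ℝ) / n with hy
  have hycube : ∀ k, y k ∈ cube d := by
    intro k j _
    refine ⟨by positivity, ?_⟩
    rw [div_le_one hnR]
    exact_mod_cast Nat.lt_succ_iff.mp (k j).isLt
  set w : Fin d → Fin (n+1) → ℝ :=
    fun j m => (n.choose m : ℝ) * x j ^ (m:ℕ) * (1 - x j) ^ (n-(m:ℕ)) with hwdef
  have hw0 : ∀ j m, 0 ≤ w j m := by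
    intro j m
    have h1 := (hx01 j).1
    have h2 : (0:ℝ) ≤ 1 - x j := by have := (hx01 j).2; linarith
    positivity
  have hwb : ∀ j m, w j m = bernstein n m ⟨x j, hx01 j⟩ := by
    intro j m; rw [bernstein_apply]
  have sum_w : ∀ j, ∑ m : Fin (n+1), w j m = 1 := by
    intro j; simp only [hwb]; exact bernstein.probability n _
  have var_w : ∀ j, ∑ m : Fin (n+1), (x j - (m:ℝ)/n)^2 * w j m = x j * (1 - x j) / n := by
    intro j
    simp only [hwb]
    have := bernstein.variance hn.ne' ⟨x j, hx01 j⟩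
    simpa [bernstein.z] using this
  have sum_prod : ∑ k : Fin d → Fin (n+1), ∏ j, w j (k j) = 1 := by
    rw [← Fintype.prod_sum w]
    simp [sum_w]
  have prod_nn : ∀ k : Fin d → Fin (n+1), 0 ≤ ∏ j, w j (k j) :=
    fun k => Finset.prod_nonneg fun j _ => hw0 j (k j)
  have var_all : ∀ j, ∑ k : Fin d → Fin (n+1), (x j - y k j)^2 * ∏ i, w i (k i)
      = x j * (1 - x j) / n := by
    intro j
    have step : ∀ k : Fin d → Fin (n+1), (x j - y k j)^2 * ∏ i, w i (k i)
        = ∏ i, (if i = j then (x j - (k i : ℝ)/n)^2 else 1) * w i (k i) := by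
      intro k
      conv_rhs => rw [Finset.prod_mul_distrib]
      rw [Finset.prod_ite_eq' Finset.univ j (fun i => (x j - (k i:ℝ)/n)^2)]
      simp [hy]
    rw [Finset.sum_congr rfl fun k _ => step k,
      ← Fintype.prod_sum (fun i (m : Fin (n+1)) =>
        (if i = j then (x j - (m:ℝ)/n)^2 else 1) * w i m)]
    have step2 : ∀ i, ∑ m : Fin (n+1), (if i = j then (x j - (m:ℝ)/n)^2 else 1) * w i m
        = if i = j then x j * (1 - x j)/n else 1 := by
      intro i
      by_cases h : i = j
      · subst h; simpa using var_w i
      · simp [h, sum_w i]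
    rw [Finset.prod_congr rfl fun i _ => step2 i,
      Finset.prod_ite_eq' Finset.univ j (fun _ => x j * (1 - x j)/n)]
    simp
  -- pointwise bound
  have ptw : ∀ k : Fin d → Fin (n+1),
      |f x - f (y k)| ≤ ε + 2*Γ*(ℓ^2/ε^2) * ∑ j, (x j - y k j)^2 := by
    intro k
    have hS : 0 ≤ ∑ j, (x j - y k j)^2 := Finset.sum_nonneg fun j _ => sq_nonneg _
    have hR : 0 ≤ 2*Γ*(ℓ^2/ε^2) * ∑ j, (x j - y k j)^2 := by positivity
    by_cases hℓ : ℓ ≤ 0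
    · have h1 := hlip x hx (y k) (hycube k)
      have h2 : ℓ * ‖x - y k‖ ≤ 0 := mul_nonpos_of_nonpos_of_nonneg hℓ (norm_nonneg _)
      linarith
    · push_neg at hℓ
      by_cases hfar : ∀ j, |x j - y k j| ≤ ε / ℓ
      · have hnorm : ‖x - y k‖ ≤ ε / ℓ := by
          rw [pi_norm_le_iff_of_nonneg (by positivity)]
          intro j
          simpa [Real.norm_eq_abs] using hfar j
        have := hlip x hx (y k) (hycube k)
        have h3 : ℓ * ‖x - y k‖ ≤ ℓ * (ε/ℓ) := mul_le_mul_of_nonneg_left hnorm hℓ.le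
        have h4 : ℓ * (ε/ℓ) = ε := by field_simp
        linarith
      · push_neg at hfar
        obtain ⟨j, hj⟩ := hfar
        have h1 : (ε/ℓ)^2 ≤ (x j - y k j)^2 := by
          have := pow_le_pow_left₀ (by positivity) hj.le 2
          simpa [sq_abs] using this
        have hsingle : (x j - y k j)^2 ≤ ∑ i, (x i - y k i)^2 :=
          Finset.single_le_sum (f := fun i => (x i - y k i)^2)
            (fun i _ => sq_nonneg _) (Finset.mem_univ j)
        have hterm : 1 ≤ (ℓ^2/ε^2) * ∑ i, (x i - y k i)^2 := by
          have h5 : (ε/ℓ)^2 ≤ ∑ i, (x i - y k i)^2 := h1.trans hsingle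
          have h6 : (ℓ^2/ε^2) * (ε/ℓ)^2 = 1 := by field_simp
          calc (1:ℝ) = (ℓ^2/ε^2) * (ε/ℓ)^2 := h6.symm
            _ ≤ (ℓ^2/ε^2) * ∑ i, (x i - y k i)^2 :=
              mul_le_mul_of_nonneg_left h5 (by positivity)
        have hfx := hbd x hx
        have hfy := hbd (y k) (hycube k)
        have habs : |f x - f (y k)| ≤ |f x| + |f (y k)| := abs_sub _ _
        nlinarith [hterm, hΓ, hε.le]
  -- main estimate
  have expand : f x - bernsteinPoly d n f x
      = ∑ k : Fin d → Fin (n+1), (f x - f (y k)) * ∏ j, w j (k j) := by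
    have hB : bernsteinPoly d n f x = ∑ k : Fin d → Fin (n+1), f (y k) * ∏ j, w j (k j) := rfl
    rw [hB]
    rw [Finset.sum_congr rfl fun k _ => sub_mul (f x) (f (y k)) _,
      Finset.sum_sub_distrib, ← Finset.mul_sum, sum_prod, mul_one]
  have swap : ∑ k : Fin d → Fin (n+1), (∑ j, (x j - y k j)^2) * ∏ j, w j (k j)
      = ∑ j, x j * (1 - x j) / n := by
    calc ∑ k : Fin d → Fin (n+1), (∑ j, (x j - y k j)^2) * ∏ j, w j (k j)
        = ∑ k : Fin d → Fin (n+1), ∑ j, (x j - y k j)^2 * ∏ i, w i (k i) := by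
          refine Finset.sum_congr rfl fun k _ => ?_
          rw [Finset.sum_mul]
      _ = ∑ j, ∑ k : Fin d → Fin (n+1), (x j - y k j)^2 * ∏ i, w i (k i) :=
          Finset.sum_comm
      _ = ∑ j, x j * (1 - x j) / n := Finset.sum_congr rfl fun j _ => var_all j
  have main : |f x - bernsteinPoly d n f x|
      ≤ ε + 2*Γ*(ℓ^2/ε^2) * ∑ j, x j * (1 - x j) / n := by
    calc |f x - bernsteinPoly d n f x|
        = |∑ k : Fin d → Fin (n+1), (f x - f (y k)) * ∏ j, w j (k j)| := by rw [expand]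
      _ ≤ ∑ k : Fin d → Fin (n+1), |(f x - f (y k)) * ∏ j, w j (k j)| :=
          Finset.abs_sum_le_sum_abs _ _
      _ = ∑ k : Fin d → Fin (n+1), |f x - f (y k)| * ∏ j, w j (k j) := by
          refine Finset.sum_congr rfl fun k _ => ?_
          rw [abs_mul, abs_of_nonneg (prod_nn k)]
      _ ≤ ∑ k : Fin d → Fin (n+1),
            (ε + 2*Γ*(ℓ^2/ε^2) * ∑ j, (x j - y k j)^2) * ∏ j, w j (k j) :=
          Finset.sum_le_sum fun k _ => mul_le_mul_of_nonneg_right (ptw k) (prod_nn k)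
      _ = ∑ k : Fin d → Fin (n+1),
            (ε * ∏ j, w j (k j)
              + 2*Γ*(ℓ^2/ε^2) * ((∑ j, (x j - y k j)^2) * ∏ j, w j (k j))) :=
          Finset.sum_congr rfl fun k _ => by ring
      _ = ε * ∑ k : Fin d → Fin (n+1), ∏ j, w j (k j)
            + 2*Γ*(ℓ^2/ε^2) * ∑ k : Fin d → Fin (n+1),
                (∑ j, (x j - y k j)^2) * ∏ j, w j (k j) := by
          rw [Finset.sum_add_distrib, Finset.mul_sum, Finset.mul_sum]
      _ = ε + 2*Γ*(ℓ^2/ε^2) * ∑ j, x j * (1 - x j) / n := by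
          rw [sum_prod, mul_one, swap]
  -- final arithmetic
  have hsumvar : ∑ j, x j * (1 - x j) / n ≤ (d:ℝ) * (1/(4*(n:ℝ))) := by
    calc ∑ j : Fin d, x j * (1 - x j) / n ≤ ∑ _j : Fin d, 1/(4*(n:ℝ)) := by
          refine Finset.sum_le_sum fun j _ => ?_
          have h1 := (hx01 j).1
          have h2 := (hx01 j).2
          rw [div_le_div_iff₀ hnR (by positivity)]
          nlinarith [sq_nonneg (2 * x j - 1), hnR]
      _ = (d:ℝ) * (1/(4*(n:ℝ))) := by
          rw [Finset.sum_const, Finset.card_univ, Fintype.card_fin, nsmul_eq_mul]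
  have hfinal : 2*Γ*(ℓ^2/ε^2) * ∑ j, x j * (1 - x j) / n
      ≤ 2 * Γ * ((1 + ℓ ^ 2 / (4 * n * ε ^ 2)) ^ d - 1) := by
    have hc : (0:ℝ) ≤ ℓ ^ 2 / (4 * n * ε ^ 2) := by positivity
    have hbern : (d:ℝ) * (ℓ ^ 2 / (4 * n * ε ^ 2)) ≤ (1 + ℓ ^ 2 / (4 * n * ε ^ 2)) ^ d - 1 := by
      have := one_add_mul_le_pow (by linarith : (-2:ℝ) ≤ ℓ ^ 2 / (4 * n * ε ^ 2)) d
      linarith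
    have step1 : 2*Γ*(ℓ^2/ε^2) * ∑ j, x j * (1 - x j) / n
        ≤ 2*Γ*(ℓ^2/ε^2) * ((d:ℝ) * (1/(4*(n:ℝ)))) :=
      mul_le_mul_of_nonneg_left hsumvar (by positivity)
    have step2 : 2*Γ*(ℓ^2/ε^2) * ((d:ℝ) * (1/(4*(n:ℝ))))
        = 2*Γ * ((d:ℝ) * (ℓ ^ 2 / (4 * n * ε ^ 2))) := by
      field_simp
    have step3 : 2*Γ * ((d:ℝ) * (ℓ ^ 2 / (4 * n * ε ^ 2)))
        ≤ 2 * Γ * ((1 + ℓ ^ 2 / (4 * n * ε ^ 2)) ^ d - 1) :=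
      mul_le_mul_of_nonneg_left hbern (by linarith)
    linarith
  linarith
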